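/- Let A, B, C, D, E, F be real (n-4)×(n-4) matrices such that the block matrix [[B, -F, -C, -D], [F, B, D, -C], [-Cᵀ, Dᵀ, A, -E], [-Dᵀ, -Cᵀ, E, A]] is positive semi-definite. Then tr(AB) + tr(EF) - tr(C²) - tr(D²) ≥ 0. -/

import Mathlib

open Matrix

lemma psd_trace_nonneg {n : Type*} [Fintype n] [DecidableEq n]
    {R : Matrix n n ℝ} (h : R.PosSemidef) : 0 ≤ R.trace := by
  have : ∀ i, 0 ≤ R i i := fun i => by
    exact h.diag_nonneg
  exact Finset.sum_nonneg fun i _ => this i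

lemma my_trace_fromBlocks {m n : Type*} [Fintype m] [Fintype n]
    (A : Matrix m m ℝ) (B : Matrix m n ℝ) (C : Matrix n m ℝ) (D : Matrix n n ℝ) :
    (Matrix.fromBlocks A B C D).trace = A.trace + D.trace := by
  simp [Matrix.trace, Matrix.diag, Fintype.sum_sum_type, Matrix.fromBlocks]

lemma psd_trace_mul_nonneg {n : Type*} [Fintype n] [DecidableEq n]
    {P Q : Matrix n n ℝ} (hP : P.PosSemidef) (hQ : Q.PosSemidef) :
    0 ≤ (P * Q).trace := by
  obtain ⟨X, hX⟩ : ∃ X : Matrix n n ℝ, P = Xᴴ * X := by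
    open scoped MatrixOrder Matrix.Norms.L2Operator in
    exact CStarAlgebra.nonneg_iff_eq_star_mul_self.mp hP.nonneg
  have key : (P * Q).trace = ((X * Q * Xᴴ)).trace := by
    rw [hX]
    rw [Matrix.mul_assoc, Matrix.trace_mul_comm, Matrix.mul_assoc]
  rw [key]
  exact psd_trace_nonneg (hQ.mul_mul_conjTranspose_same X)

/-- If the block matrix [[B,-F,-C,-D],[F,B,D,-C],[-Matrix.transpose C,Dᵀ,A,-E],[-Matrix.transpose D,-Matrix.transpose C,E,A]]
is positive semi-definite, then tr(AB) + tr(EF) - tr(C²) - tr(D²) ≥ 0. -/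
theorem stmt_0 (k : ℕ) (A B C D E F : Matrix (Fin k) (Fin k) ℝ)
    (hPSD : (Matrix.fromBlocks
      (Matrix.fromBlocks B (-F) F B)
      (Matrix.fromBlocks (-C) (-D) D (-C))
      (Matrix.fromBlocks (-Matrix.transpose C) (Matrix.transpose D) (-Matrix.transpose D) (-Matrix.transpose C))
      (Matrix.fromBlocks A (-E) E A)).PosSemidef) :
    0 ≤ (A * B).trace + (E * F).trace - (C * C).trace - (D * D).trace := by
  set M := (Matrix.fromBlocks
      (Matrix.fromBlocks B (-F) F B)
      (Matrix.fromBlocks (-C) (-D) D (-C))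
      (Matrix.fromBlocks (-Matrix.transpose C) (Matrix.transpose D) (-Matrix.transpose D) (-Matrix.transpose C))
      (Matrix.fromBlocks A (-E) E A)) with hM
  set K : Matrix (Fin k ⊕ Fin k) (Fin k ⊕ Fin k) ℝ := Matrix.fromBlocks 1 0 0 (-1) with hK
  set J := Matrix.fromBlocks (0 : Matrix (Fin k ⊕ Fin k) (Fin k ⊕ Fin k) ℝ) K (-K) 0 with hJ
  have h2 : (J * M * Jᴴ).PosSemidef := hPSD.mul_mul_conjTranspose_same J
  have h3 : 0 ≤ (M * (J * M * Jᴴ)).trace := psd_trace_mul_nonneg hPSD h2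
  have h4 : (M * (J * M * Jᴴ)).trace =
      4 * ((A * B).trace + (E * F).trace - (C * C).trace - (D * D).trace) := by
    have hJH : Jᴴ = Jᵀ := Matrix.conjTranspose_eq_transpose_of_trivial J
    rw [hJH, hM, hJ, hK]
    simp only [Matrix.fromBlocks_transpose, Matrix.transpose_neg, Matrix.transpose_zero,
      Matrix.transpose_one, Matrix.fromBlocks_multiply, Matrix.mul_zero, Matrix.zero_mul,
      Matrix.mul_one, Matrix.one_mul, Matrix.mul_neg, Matrix.neg_mul, zero_add,
      add_zero, neg_neg, neg_zero, my_trace_fromBlocks,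
      Matrix.trace_add, Matrix.trace_neg, Matrix.trace_transpose, add_zero, zero_add,
      ← Matrix.transpose_mul]
    rw [Matrix.trace_mul_comm B A, Matrix.trace_mul_comm F E]
    ring_nf
  linarith [h3, h4.symm ▸ h3]
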